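/- For every r with 0 < r < 1/2 and every ε > 0 there exists a constant C > 0 such that for all families N : ℤ → [0,∞) and P : ℤ → [0,∞), writing j₃ := k − j₁ + j₂ and φ := (⟨k⟩^{2r} − ⟨j₁⟩^{2r} + ⟨j₂⟩^{2r} − ⟨j₃⟩^{2r}) / (k² − j₁² + j₂² − j₃²), one has Σ_{(k,j₁,j₂)∈ℤ³, (k−j₁)(j₁−j₂)≠0} |φ| · N_{j₁} · N_{j₂} · N_{j₃} · P_k ≤ C · (Σ_{j∈ℤ} N_j²) · (Σ_{j∈ℤ} ⟨j⟩^{2ε} N_j²)^{1/2} · (Σ_{k∈ℤ} P_k²)^{1/2}, where all sums are taken in [0,∞]. -/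

import Mathlib

open scoped ENNReal
open MeasureTheory

/-- The Japanese bracket `⟨x⟩ = √(1 + x²)`. -/
noncomputable def jbr (x : ℝ) : ℝ := Real.sqrt (1 + x^2)

/-- The weight `φ_{k,j₁,j₂,j₃} = (⟨k⟩^{2r} - ⟨j₁⟩^{2r} + ⟨j₂⟩^{2r} - ⟨j₃⟩^{2r}) /
(k² - j₁² + j₂² - j₃²)` with `j₃ = k - j₁ + j₂`. -/
noncomputable def phiWeight (r : ℝ) (p : ℤ × ℤ × ℤ) : ℝ :=
  (jbr p.1 ^ (2*r) - jbr p.2.1 ^ (2*r) + jbr p.2.2 ^ (2*r)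
      - jbr (p.1 - p.2.1 + p.2.2 : ℤ) ^ (2*r))
    / ((p.1 : ℝ)^2 - (p.2.1 : ℝ)^2 + (p.2.2 : ℝ)^2 - ((p.1 - p.2.1 + p.2.2 : ℤ) : ℝ)^2)

lemma jbr_pos (x : ℝ) : 0 < jbr x := Real.sqrt_pos.2 (by positivity)

lemma jbr_sq (x : ℝ) : jbr x ^ 2 = 1 + x ^ 2 := Real.sq_sqrt (by positivity)

lemma one_le_jbr (x : ℝ) : 1 ≤ jbr x := by
  nlinarith [jbr_sq x, (jbr_pos x).le]

lemma abs_le_jbr (x : ℝ) : |x| ≤ jbr x := by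
  nlinarith [jbr_sq x, (jbr_pos x).le, sq_abs x, abs_nonneg x]

lemma jbr_lip_one_side (x y : ℝ) : jbr x ≤ |x - y| + jbr y := by
  have h1 : y * (x - y) ≤ |y| * |x - y| := (le_abs_self _).trans (le_of_eq (abs_mul _ _))
  have h2 : |y| * |x - y| ≤ jbr y * |x - y| :=
    mul_le_mul_of_nonneg_right (abs_le_jbr y) (abs_nonneg _)
  calc jbr x = Real.sqrt (1 + x^2) := rfl
    _ ≤ Real.sqrt ((|x - y| + jbr y)^2) := by
        apply Real.sqrt_le_sqrt
        nlinarith [jbr_sq y, sq_abs (x - y), abs_nonneg (x - y), (jbr_pos y).le]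
    _ = |x - y| + jbr y := Real.sqrt_sq (add_nonneg (abs_nonneg _) (jbr_pos y).le)

lemma jbr_lip (x y : ℝ) : |jbr x - jbr y| ≤ |x - y| := by
  rw [abs_sub_le_iff]
  constructor
  · have := jbr_lip_one_side x y; linarith
  · have := jbr_lip_one_side y x; rw [abs_sub_comm] at this; linarith

lemma rpow_subadd {x y p : ℝ} (hx : 0 ≤ x) (hy : 0 ≤ y) (hp : 0 ≤ p) (hp1 : p ≤ 1) :
    (x + y) ^ p ≤ x ^ p + y ^ p := by
  have h := NNReal.rpow_add_le_add_rpow x.toNNReal y.toNNReal hp hp1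
  have := NNReal.coe_le_coe.2 h
  push_cast at this
  rwa [Real.coe_toNNReal x hx, Real.coe_toNNReal y hy] at this

lemma rpow_hoelder {u v p : ℝ} (hu : 0 ≤ u) (hv : 0 ≤ v) (hp : 0 ≤ p) (hp1 : p ≤ 1) :
    |u ^ p - v ^ p| ≤ |u - v| ^ p := by
  wlog h : v ≤ u generalizing u v
  · rw [abs_sub_comm, abs_sub_comm u v]; exact this hv hu (le_of_not_ge h)
  have h1 : v ^ p ≤ u ^ p := Real.rpow_le_rpow hv h hp
  rw [abs_of_nonneg (by linarith), abs_of_nonneg (by linarith : (0:ℝ) ≤ u - v)]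
  have := rpow_subadd (sub_nonneg.2 h) hv hp hp1
  rw [sub_add_cancel] at this
  linarith

lemma num_pair_bound {x y : ℝ} (r : ℝ) (hr0 : 0 < r) (hr : r ≤ 1/2) :
    |jbr x ^ (2*r) - jbr y ^ (2*r)| ≤ |x - y| ^ (2*r) := by
  calc |jbr x ^ (2*r) - jbr y ^ (2*r)| ≤ |jbr x - jbr y| ^ (2*r) :=
        rpow_hoelder (jbr_pos x).le (jbr_pos y).le (by linarith) (by linarith)
    _ ≤ |x - y| ^ (2*r) :=
        Real.rpow_le_rpow (abs_nonneg _) (jbr_lip x y) (by linarith)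

lemma phi_bound {r : ℝ} (hr0 : 0 < r) (hr : r ≤ 1/2) (p : ℤ × ℤ × ℤ)
    (h : (p.1 - p.2.1) * (p.2.1 - p.2.2) ≠ 0) :
    |phiWeight r p| ≤ |((p.1 - p.2.1 : ℤ) : ℝ)| ^ (r-1) * |((p.2.1 - p.2.2 : ℤ) : ℝ)| ^ (r-1) := by
  obtain ⟨k, j1, j2⟩ := p
  simp only at h ⊢
  have ha : k - j1 ≠ 0 := fun hh => h (by rw [hh]; ring)
  have hb : j1 - j2 ≠ 0 := fun hh => h (by rw [hh]; ring)
  set A : ℝ := |((k - j1 : ℤ) : ℝ)| with hA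
  set B : ℝ := |((j1 - j2 : ℤ) : ℝ)| with hB
  have hA1 : 1 ≤ A := by
    rw [hA, ← Int.cast_abs]; exact_mod_cast Int.one_le_abs ha
  have hB1 : 1 ≤ B := by
    rw [hB, ← Int.cast_abs]; exact_mod_cast Int.one_le_abs hb
  have hA0 : 0 < A := by linarith
  have hB0 : 0 < B := by linarith
  have hD : ((k : ℝ)^2 - (j1 : ℝ)^2 + (j2 : ℝ)^2 - ((k - j1 + j2 : ℤ) : ℝ)^2)
      = 2 * ((k - j1 : ℤ) : ℝ) * ((j1 - j2 : ℤ) : ℝ) := by push_cast; ring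
  set num : ℝ := jbr k ^ (2*r) - jbr j1 ^ (2*r) + jbr j2 ^ (2*r)
      - jbr (k - j1 + j2 : ℤ) ^ (2*r) with hnum
  have hnumA : |num| ≤ 2 * A ^ (2*r) := by
    have h1 := num_pair_bound (x := (k:ℝ)) (y := (j1:ℝ)) r hr0 hr
    have h2 := num_pair_bound (x := (j2:ℝ)) (y := ((k - j1 + j2 : ℤ):ℝ)) r hr0 hr
    have e1 : |(k:ℝ) - (j1:ℝ)| = A := by rw [hA]; push_cast; ring_nf
    have e2 : |(j2:ℝ) - ((k - j1 + j2 : ℤ):ℝ)| = A := by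
      rw [hA, ← abs_neg]; push_cast; ring_nf
    rw [e1] at h1; rw [e2] at h2
    calc |num| ≤ |jbr k ^ (2*r) - jbr j1 ^ (2*r)|
        + |jbr j2 ^ (2*r) - jbr (k - j1 + j2 : ℤ) ^ (2*r)| := by
          rw [hnum]; apply (abs_add_le _ _).trans_eq' ; ring_nf
      _ ≤ 2 * A ^ (2*r) := by linarith
  have hnumB : |num| ≤ 2 * B ^ (2*r) := by
    have h1 := num_pair_bound (x := (k:ℝ)) (y := ((k - j1 + j2 : ℤ):ℝ)) r hr0 hr
    have h2 := num_pair_bound (x := (j1:ℝ)) (y := (j2:ℝ)) r hr0 hr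
    have e1 : |(k:ℝ) - ((k - j1 + j2 : ℤ):ℝ)| = B := by rw [hB]; push_cast; ring_nf
    have e2 : |(j1:ℝ) - (j2:ℝ)| = B := by rw [hB]; push_cast; ring_nf
    rw [e1] at h1; rw [e2] at h2
    calc |num| ≤ |jbr k ^ (2*r) - jbr (k - j1 + j2 : ℤ) ^ (2*r)|
        + |jbr j1 ^ (2*r) - jbr j2 ^ (2*r)| := by
          rw [hnum]; apply (abs_sub _ _).trans_eq'; ring_nf
      _ ≤ 2 * B ^ (2*r) := by linarith
  have hmin : |num| ≤ 2 * (A ^ r * B ^ r) := by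
    rcases le_total A B with hAB | hAB
    · have : A ^ (2*r) ≤ A ^ r * B ^ r := by
        rw [show 2*r = r + r by ring, Real.rpow_add hA0]
        exact mul_le_mul_of_nonneg_left
          (Real.rpow_le_rpow hA0.le hAB hr0.le) (Real.rpow_nonneg hA0.le r)
      linarith
    · have : B ^ (2*r) ≤ A ^ r * B ^ r := by
        rw [show 2*r = r + r by ring, Real.rpow_add hB0]
        exact mul_le_mul_of_nonneg_right
          (Real.rpow_le_rpow hB0.le hAB hr0.le) (Real.rpow_nonneg hB0.le r)
      linarith
  have hφ : |phiWeight r (k, j1, j2)| = |num| / (2 * A * B) := by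
    rw [phiWeight]
    simp only
    rw [hD, abs_div, hnum]
    congr 1
    rw [abs_mul, abs_mul, hA, hB]
    norm_num
  rw [show |phiWeight r (k, j1, j2)| = |num| / (2 * A * B) from hφ]
  rw [div_le_iff₀ (by positivity)]
  have eA : A ^ (r-1) * A = A ^ r := by
    rw [show r - 1 = r + (-1) by ring, Real.rpow_add hA0, Real.rpow_neg_one]
    field_simp
  have eB : B ^ (r-1) * B = B ^ r := by
    rw [show r - 1 = r + (-1) by ring, Real.rpow_add hB0, Real.rpow_neg_one]
    field_simp
  calc |num| ≤ 2 * (A ^ r * B ^ r) := hmin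
    _ = A ^ (r-1) * B ^ (r-1) * (2 * A * B) := by rw [← eA, ← eB]; ring

lemma ennreal_cs (f g : ℤ → ℝ≥0∞) :
    ∑' a, f a * g a ≤ (∑' a, f a ^ (2:ℝ)) ^ ((1:ℝ)/2) * (∑' a, g a ^ (2:ℝ)) ^ ((1:ℝ)/2) := by
  have hpq : Real.HolderConjugate 2 2 := Real.HolderConjugate.two_two
  have h := ENNReal.lintegral_mul_le_Lp_mul_Lq (Measure.count : Measure ℤ) hpq
    (f := f) (g := g) (measurable_of_countable f).aemeasurable
    (measurable_of_countable g).aemeasurable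
  simpa [MeasureTheory.lintegral_count, Pi.mul_apply] using h

lemma half_half (x : ℝ≥0∞) : x ^ ((1:ℝ)/2) * x ^ ((1:ℝ)/2) = x := by
  rw [← ENNReal.rpow_add_of_nonneg _ _ (by norm_num) (by norm_num)]; norm_num

lemma sq_half (x : ℝ≥0∞) : (x ^ ((1:ℝ)/2)) ^ (2:ℝ) = x := by
  rw [← ENNReal.rpow_mul]; norm_num

lemma main_est (A n q : ℤ → ℝ≥0∞) :
    (∑' x : ℤ × ℤ × ℤ,
        A x.2.1 * A x.2.2 * (n x.1 * n (x.1 - x.2.2) * n (x.1 + x.2.1 - x.2.2) * q (x.1 + x.2.1)))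
      ≤ (∑' a, A a ^ (2:ℝ)) * ((∑' j, n j ^ (2:ℝ))
          * ((∑' j, n j ^ (2:ℝ)) ^ ((1:ℝ)/2) * (∑' k, q k ^ (2:ℝ)) ^ ((1:ℝ)/2))) := by
  set S2 := ∑' a, A a ^ (2:ℝ) with hS2
  set E := ∑' j, n j ^ (2:ℝ) with hE
  set Q := ∑' k, q k ^ (2:ℝ) with hQ
  set G2 : ℤ → ℝ≥0∞ := fun b => ∑' m, (n (m - b) * q m) ^ (2:ℝ) with hG2
  have hEtrans : ∀ b : ℤ, ∑' j, n (j - b) ^ (2:ℝ) = E := by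
    intro b
    rw [hE, ← (Equiv.subRight b).tsum_eq (fun j => n j ^ (2:ℝ))]
    rfl
  have step1 : ∀ j b : ℤ, (∑' a, A a * (n (j + a - b) * q (j + a)))
      ≤ S2 ^ ((1:ℝ)/2) * (G2 b) ^ ((1:ℝ)/2) := by
    intro j b
    have h := ennreal_cs A (fun a => n (j + a - b) * q (j + a))
    have he : (∑' a, (n (j + a - b) * q (j + a)) ^ (2:ℝ)) = G2 b :=
      (Equiv.addLeft j).tsum_eq (fun m => (n (m - b) * q m) ^ (2:ℝ))
    rwa [he] at h
  have step2 : ∀ b : ℤ, (∑' j, n j * n (j - b)) ≤ E := by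
    intro b
    have h := ennreal_cs n (fun j => n (j - b))
    rwa [hEtrans b, ← hE, half_half] at h
  have hG2sum : ∑' b, G2 b = E * Q := by
    have e1 : ∀ b m : ℤ, (n (m - b) * q m) ^ (2:ℝ) = n (m - b) ^ (2:ℝ) * q m ^ (2:ℝ) :=
      fun b m => ENNReal.mul_rpow_of_nonneg _ _ (by norm_num)
    calc ∑' b, G2 b = ∑' (b) (m), n (m - b) ^ (2:ℝ) * q m ^ (2:ℝ) := by
          rw [hG2]; exact tsum_congr fun b => tsum_congr fun m => e1 b m
      _ = ∑' (m) (b), n (m - b) ^ (2:ℝ) * q m ^ (2:ℝ) := ENNReal.tsum_comm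
      _ = ∑' m, (∑' b, n (m - b) ^ (2:ℝ)) * q m ^ (2:ℝ) := by
          exact tsum_congr fun m => ENNReal.tsum_mul_right
      _ = ∑' m, E * q m ^ (2:ℝ) := by
          refine tsum_congr fun m => ?_
          congr 1
          rw [hE, ← (Equiv.subLeft m).tsum_eq (fun j => n j ^ (2:ℝ))]
          rfl
      _ = E * Q := by rw [ENNReal.tsum_mul_left, hQ]
  have step3 : (∑' b, A b * (G2 b) ^ ((1:ℝ)/2)) ≤ S2 ^ ((1:ℝ)/2) * (E * Q) ^ ((1:ℝ)/2) := by
    have h := ennreal_cs A (fun b => (G2 b) ^ ((1:ℝ)/2))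
    have he : (∑' b, ((G2 b) ^ ((1:ℝ)/2)) ^ (2:ℝ)) = E * Q := by
      rw [← hG2sum]; exact tsum_congr fun b => sq_half _
    rwa [he] at h
  calc (∑' x : ℤ × ℤ × ℤ,
        A x.2.1 * A x.2.2 * (n x.1 * n (x.1 - x.2.2) * n (x.1 + x.2.1 - x.2.2) * q (x.1 + x.2.1)))
      = ∑' (j : ℤ) (a : ℤ) (b : ℤ),
          A a * A b * (n j * n (j - b) * n (j + a - b) * q (j + a)) := by
        rw [ENNReal.tsum_prod']
        exact tsum_congr fun j => ENNReal.tsum_prod'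
    _ = ∑' (j : ℤ) (b : ℤ) (a : ℤ),
          A a * A b * (n j * n (j - b) * n (j + a - b) * q (j + a)) := by
        exact tsum_congr fun j => ENNReal.tsum_comm
    _ = ∑' (j : ℤ) (b : ℤ), (A b * n j * n (j - b)) * ∑' a : ℤ,
          A a * (n (j + a - b) * q (j + a)) := by
        refine tsum_congr fun j => tsum_congr fun b => ?_
        rw [← ENNReal.tsum_mul_left]
        exact tsum_congr fun a => by ring
    _ ≤ ∑' (j : ℤ) (b : ℤ), (A b * n j * n (j - b)) * (S2 ^ ((1:ℝ)/2) * (G2 b) ^ ((1:ℝ)/2)) := by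
        refine ENNReal.tsum_le_tsum fun j => ENNReal.tsum_le_tsum fun b => ?_
        exact mul_le_mul_right (step1 j b) _
    _ = ∑' (b : ℤ), (∑' j : ℤ, n j * n (j - b))
          * (A b * (S2 ^ ((1:ℝ)/2) * (G2 b) ^ ((1:ℝ)/2))) := by
        rw [ENNReal.tsum_comm]
        refine tsum_congr fun b => ?_
        rw [← ENNReal.tsum_mul_right]
        exact tsum_congr fun j => by ring
    _ ≤ ∑' (b : ℤ), E * (A b * (S2 ^ ((1:ℝ)/2) * (G2 b) ^ ((1:ℝ)/2))) := by
        refine ENNReal.tsum_le_tsum fun b => mul_le_mul_left (step2 b) _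
    _ = (E * S2 ^ ((1:ℝ)/2)) * ∑' (b : ℤ), A b * (G2 b) ^ ((1:ℝ)/2) := by
        rw [← ENNReal.tsum_mul_left]
        refine tsum_congr fun b => by ring
    _ ≤ (E * S2 ^ ((1:ℝ)/2)) * (S2 ^ ((1:ℝ)/2) * (E * Q) ^ ((1:ℝ)/2)) :=
        mul_le_mul_right step3 _
    _ = S2 * (E * (E ^ ((1:ℝ)/2) * Q ^ ((1:ℝ)/2))) := by
        rw [ENNReal.mul_rpow_of_nonneg _ _ (by norm_num : (0:ℝ) ≤ 1/2)]
        rw [show (E * S2 ^ ((1:ℝ)/2)) * (S2 ^ ((1:ℝ)/2) * (E ^ ((1:ℝ)/2) * Q ^ ((1:ℝ)/2)))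
          = (S2 ^ ((1:ℝ)/2) * S2 ^ ((1:ℝ)/2)) * (E * (E ^ ((1:ℝ)/2) * Q ^ ((1:ℝ)/2))) by ring]
        rw [half_half]

def reEquiv : (ℤ × ℤ × ℤ) ≃ (ℤ × ℤ × ℤ) where
  toFun := fun x => (x.1 + x.2.1, x.1, x.1 - x.2.2)
  invFun := fun p => (p.2.1, p.1 - p.2.1, p.2.1 - p.2.2)
  left_inv := by
    rintro ⟨j, a, b⟩
    simp only
    rw [Prod.mk.injEq, Prod.mk.injEq]
    exact ⟨rfl, by ring, by ring⟩
  right_inv := by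
    rintro ⟨k, j1, j2⟩
    simp only
    rw [Prod.mk.injEq, Prod.mk.injEq]
    exact ⟨by ring, rfl, by ring⟩

/-- for `0 < r < 1/2` and `ε > 0` there is `C > 0` such that for all
nonnegative families `N, P`,
`Σ_{(k,j₁,j₂), (k-j₁)(j₁-j₂)≠0} |φ| N_{j₁} N_{j₂} N_{j₃} P_k
  ≤ C (Σ N_j²) (Σ ⟨j⟩^{2ε} N_j²)^{1/2} (Σ P_k²)^{1/2}`,
all sums taken in `[0,∞]`. -/
theorem stmt9 (r ε : ℝ) (hr0 : 0 < r) (hr : r < 1/2) (hε : 0 < ε) :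
    ∃ C : ℝ, 0 < C ∧ ∀ N P : ℤ → ℝ, (∀ j : ℤ, 0 ≤ N j) → (∀ k : ℤ, 0 ≤ P k) →
      (∑' p : ℤ × ℤ × ℤ,
          (if (p.1 - p.2.1) * (p.2.1 - p.2.2) ≠ 0 then
            ENNReal.ofReal (|phiWeight r p| * N p.2.1 * N p.2.2
              * N (p.1 - p.2.1 + p.2.2) * P p.1)
          else 0))
        ≤ ENNReal.ofReal C * (∑' j : ℤ, ENNReal.ofReal ((N j)^2))
            * (∑' j : ℤ, ENNReal.ofReal (jbr j ^ (2*ε) * (N j)^2)) ^ ((1:ℝ)/2)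
            * (∑' k : ℤ, ENNReal.ofReal ((P k)^2)) ^ ((1:ℝ)/2) := by
  classical
  set A : ℤ → ℝ≥0∞ := fun a => ENNReal.ofReal (|(a:ℝ)| ^ (r-1)) with hAdef
  -- the weight sum is finite
  have hsummable : Summable (fun a : ℤ => |(a:ℝ)| ^ (-(2-2*r))) :=
    Real.summable_abs_int_rpow (by linarith)
  set T : ℝ := ∑' a : ℤ, |(a:ℝ)| ^ (-(2-2*r)) with hTdef
  have hT0 : 0 ≤ T := tsum_nonneg fun a => Real.rpow_nonneg (abs_nonneg _) _
  have hS2eq : (∑' a : ℤ, A a ^ (2:ℝ)) = ENNReal.ofReal T := by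
    rw [hTdef, ENNReal.ofReal_tsum_of_nonneg (fun a => Real.rpow_nonneg (abs_nonneg _) _)
      hsummable]
    refine tsum_congr fun a => ?_
    rw [hAdef]
    simp only
    rw [ENNReal.ofReal_rpow_of_nonneg (Real.rpow_nonneg (abs_nonneg _) _) (by norm_num)]
    congr 1
    rw [← Real.rpow_mul (abs_nonneg _)]
    congr 1
    ring
  have hS2C : (∑' a : ℤ, A a ^ (2:ℝ)) ≤ ENNReal.ofReal (T + 1) :=
    hS2eq ▸ ENNReal.ofReal_le_ofReal (by linarith)
  refine ⟨T + 1, by linarith, fun N P hN hP => ?_⟩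
  set n : ℤ → ℝ≥0∞ := fun j => ENNReal.ofReal (N j) with hndef
  set q : ℤ → ℝ≥0∞ := fun k => ENNReal.ofReal (P k) with hqdef
  -- termwise bound
  have hterm : ∀ p : ℤ × ℤ × ℤ,
      (if (p.1 - p.2.1) * (p.2.1 - p.2.2) ≠ 0 then
          ENNReal.ofReal (|phiWeight r p| * N p.2.1 * N p.2.2
            * N (p.1 - p.2.1 + p.2.2) * P p.1)
        else 0)
      ≤ A (p.1 - p.2.1) * A (p.2.1 - p.2.2)
          * (n p.2.1 * n p.2.2 * n (p.1 - p.2.1 + p.2.2) * q p.1) := by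
    intro p
    split_ifs with hc
    · have hb := phi_bound hr0 hr.le p hc
      calc ENNReal.ofReal (|phiWeight r p| * N p.2.1 * N p.2.2
            * N (p.1 - p.2.1 + p.2.2) * P p.1)
          ≤ ENNReal.ofReal ((|((p.1 - p.2.1 : ℤ) : ℝ)| ^ (r-1)
              * |((p.2.1 - p.2.2 : ℤ) : ℝ)| ^ (r-1)) * N p.2.1 * N p.2.2
              * N (p.1 - p.2.1 + p.2.2) * P p.1) := by
            apply ENNReal.ofReal_le_ofReal
            have h1 : 0 ≤ N p.2.1 := hN _
            have h2 : 0 ≤ N p.2.2 := hN _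
            have h3 : 0 ≤ N (p.1 - p.2.1 + p.2.2) := hN _
            have h4 : 0 ≤ P p.1 := hP _
            have := mul_le_mul_of_nonneg_right (mul_le_mul_of_nonneg_right
              (mul_le_mul_of_nonneg_right (mul_le_mul_of_nonneg_right hb h1) h2) h3) h4
            exact this
        _ = A (p.1 - p.2.1) * A (p.2.1 - p.2.2)
              * (n p.2.1 * n p.2.2 * n (p.1 - p.2.1 + p.2.2) * q p.1) := by
            have hx : 0 ≤ |((p.1 - p.2.1 : ℤ):ℝ)| ^ (r-1) * |((p.2.1 - p.2.2 : ℤ):ℝ)| ^ (r-1) :=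
              mul_nonneg (Real.rpow_nonneg (abs_nonneg _) _) (Real.rpow_nonneg (abs_nonneg _) _)
            simp only [hAdef, hndef, hqdef]
            rw [ENNReal.ofReal_mul (mul_nonneg (mul_nonneg (mul_nonneg hx (hN _)) (hN _)) (hN _)),
              ENNReal.ofReal_mul (mul_nonneg (mul_nonneg hx (hN _)) (hN _)),
              ENNReal.ofReal_mul (mul_nonneg hx (hN _)),
              ENNReal.ofReal_mul hx,
              ENNReal.ofReal_mul (Real.rpow_nonneg (abs_nonneg _) _)]
            ring
    · exact zero_le
  have hreindex :
      (∑' p : ℤ × ℤ × ℤ, A (p.1 - p.2.1) * A (p.2.1 - p.2.2)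
          * (n p.2.1 * n p.2.2 * n (p.1 - p.2.1 + p.2.2) * q p.1))
      = (∑' x : ℤ × ℤ × ℤ, A x.2.1 * A x.2.2
          * (n x.1 * n (x.1 - x.2.2) * n (x.1 + x.2.1 - x.2.2) * q (x.1 + x.2.1))) := by
    rw [← reEquiv.tsum_eq (fun p => A (p.1 - p.2.1) * A (p.2.1 - p.2.2)
        * (n p.2.1 * n p.2.2 * n (p.1 - p.2.1 + p.2.2) * q p.1))]
    refine tsum_congr fun x => ?_
    obtain ⟨j, a, b⟩ := x
    have h1 : j + a - j = a := by ring
    have h2 : j - (j - b) = b := by ring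
    show A (j + a - j) * A (j - (j - b)) * (n j * n (j - b) * n (j + a - j + (j - b))
        * q (j + a)) = _
    rw [h1, h2]
    have h3 : a + (j - b) = j + a - b := by ring
    rw [h3]
  -- conversions of the squared sums
  have hEeq : (∑' j : ℤ, n j ^ (2:ℝ)) = ∑' j : ℤ, ENNReal.ofReal ((N j)^2) := by
    refine tsum_congr fun j => ?_
    rw [hndef]
    simp only
    rw [ENNReal.ofReal_rpow_of_nonneg (hN j) (by norm_num), Real.rpow_two]
  have hQeq : (∑' k : ℤ, q k ^ (2:ℝ)) = ∑' k : ℤ, ENNReal.ofReal ((P k)^2) := by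
    refine tsum_congr fun k => ?_
    rw [hqdef]
    simp only
    rw [ENNReal.ofReal_rpow_of_nonneg (hP k) (by norm_num), Real.rpow_two]
  set E := ∑' j : ℤ, ENNReal.ofReal ((N j)^2) with hEdef
  set F := ∑' j : ℤ, ENNReal.ofReal (jbr j ^ (2*ε) * (N j)^2) with hFdef
  set Qs := ∑' k : ℤ, ENNReal.ofReal ((P k)^2) with hQdef2
  have hEF : E ≤ F := by
    refine ENNReal.tsum_le_tsum fun j => ENNReal.ofReal_le_ofReal ?_
    have h1 : (1:ℝ) ≤ jbr j ^ (2*ε) := by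
      calc (1:ℝ) = 1 ^ (2*ε) := (Real.one_rpow _).symm
        _ ≤ jbr j ^ (2*ε) := Real.rpow_le_rpow zero_le_one (one_le_jbr _) (by linarith)
    nlinarith [sq_nonneg (N j)]
  calc (∑' p : ℤ × ℤ × ℤ,
          (if (p.1 - p.2.1) * (p.2.1 - p.2.2) ≠ 0 then
            ENNReal.ofReal (|phiWeight r p| * N p.2.1 * N p.2.2
              * N (p.1 - p.2.1 + p.2.2) * P p.1)
          else 0))
      ≤ ∑' p : ℤ × ℤ × ℤ, A (p.1 - p.2.1) * A (p.2.1 - p.2.2)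
          * (n p.2.1 * n p.2.2 * n (p.1 - p.2.1 + p.2.2) * q p.1) :=
        ENNReal.tsum_le_tsum hterm
    _ = (∑' x : ℤ × ℤ × ℤ, A x.2.1 * A x.2.2
          * (n x.1 * n (x.1 - x.2.2) * n (x.1 + x.2.1 - x.2.2) * q (x.1 + x.2.1))) := hreindex
    _ ≤ (∑' a : ℤ, A a ^ (2:ℝ)) * ((∑' j, n j ^ (2:ℝ))
          * ((∑' j, n j ^ (2:ℝ)) ^ ((1:ℝ)/2) * (∑' k, q k ^ (2:ℝ)) ^ ((1:ℝ)/2))) :=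
        main_est A n q
    _ = (∑' a : ℤ, A a ^ (2:ℝ)) * (E * (E ^ ((1:ℝ)/2) * Qs ^ ((1:ℝ)/2))) := by rw [hEeq, hQeq]
    _ ≤ ENNReal.ofReal (T + 1) * (E * (F ^ ((1:ℝ)/2) * Qs ^ ((1:ℝ)/2))) := by
        refine mul_le_mul' hS2C (mul_le_mul' le_rfl (mul_le_mul' ?_ le_rfl))
        exact ENNReal.rpow_le_rpow hEF (by norm_num)
    _ = ENNReal.ofReal (T + 1) * E * F ^ ((1:ℝ)/2) * Qs ^ ((1:ℝ)/2) := by ring
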